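/- Let (X, U_s, U_f, Σ_s, Σ_f) be a GSVD factorization of (R_s, R_f). For any index i ∈ {1,…,n_f}, let x_i be the i-th column of X and set y_i = (X·Xᵀ)⁻¹·x_i. Then ‖R_sᵀ·y_i‖ ≠ 0, ‖R_fᵀ·y_i‖ ≠ 0, and the gradient expression ∇f(y) := (1/‖R_fᵀy‖²)·(R_s R_sᵀ y − (‖R_sᵀy‖²/‖R_fᵀy‖²)·R_f R_fᵀ y) + (1/‖R_sᵀy‖²)·(R_f R_fᵀ y − (‖R_fᵀy‖²/‖R_sᵀy‖²)·R_s R_sᵀ y) vanishes at y = y_i, i.e., ∇f(y_i) = 0. -/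

import Mathlib

open Matrix

/-- **Lemma 2 of the paper (first part).** For each TISO index `i` (i.e. a
column of `X` in the intersection subspace), the vector
`yᵢ = (X·Xᵀ)⁻¹·xᵢ` has `‖Rsᵀyᵢ‖² ≠ 0`, `‖Rfᵀyᵢ‖² ≠ 0` and the gradient of the
gain-ratio function `f` vanishes at `yᵢ`. Squared Euclidean norms are written
as sums of squares. -/
theorem gsvd_gradient_vanishes (nf k : ℕ)
    (Rs : Matrix (Fin nf ⊕ Fin k) (Fin nf ⊕ Fin k) ℝ)
    (Rf : Matrix (Fin nf ⊕ Fin k) (Fin nf) ℝ)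
    (hRs : Rs.rank = nf + k) (hRf : Rf.rank = nf)
    (X Us : Matrix (Fin nf ⊕ Fin k) (Fin nf ⊕ Fin k) ℝ)
    (Uf : Matrix (Fin nf) (Fin nf) ℝ) (σs σf : Fin nf → ℝ)
    (hX : IsUnit X)
    (hUs : Usᵀ * Us = 1)
    (hUf : Ufᵀ * Uf = 1)
    (hσs : ∀ i, 0 < σs i)
    (hσf : ∀ i, 0 < σf i)
    (hσ : ∀ i, σs i ^ 2 + σf i ^ 2 = 1)
    (hRsX : Rs = X * fromBlocks (diagonal σs) 0 0 (1 : Matrix (Fin k) (Fin k) ℝ) * Usᵀ)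
    (hRfX : Rf = X * fromRows (diagonal σf) (0 : Matrix (Fin k) (Fin nf) ℝ) * Ufᵀ)
    (i : Fin nf)
    (y : (Fin nf ⊕ Fin k) → ℝ)
    (hy : y = (X * Xᵀ)⁻¹.mulVec fun j => X j (Sum.inl i)) :
    (∑ j, Rsᵀ.mulVec y j ^ 2) ≠ 0 ∧
    (∑ j, Rfᵀ.mulVec y j ^ 2) ≠ 0 ∧
    (1 / ∑ j, Rfᵀ.mulVec y j ^ 2) •
        ((Rs * Rsᵀ).mulVec y -
          ((∑ j, Rsᵀ.mulVec y j ^ 2) / ∑ j, Rfᵀ.mulVec y j ^ 2) • (Rf * Rfᵀ).mulVec y)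
      + (1 / ∑ j, Rsᵀ.mulVec y j ^ 2) •
        ((Rf * Rfᵀ).mulVec y -
          ((∑ j, Rfᵀ.mulVec y j ^ 2) / ∑ j, Rsᵀ.mulVec y j ^ 2) • (Rs * Rsᵀ).mulVec y)
      = 0 := by
  have hdet : IsUnit X.det := (Matrix.isUnit_iff_isUnit_det X).mp hX
  have hdetT : IsUnit Xᵀ.det := by rwa [Matrix.det_transpose]
  set e : (Fin nf ⊕ Fin k) → ℝ := Pi.single (Sum.inl i) 1 with he
  -- y = Xᵀ⁻¹ *ᵥ e
  have hy' : y = Xᵀ⁻¹ *ᵥ e := by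
    have hcol : (fun j => X j (Sum.inl i)) = X *ᵥ e := by
      rw [he, mulVec_single]; simp; rfl
    have h1 : X⁻¹ *ᵥ (X *ᵥ e) = e := by
      rw [mulVec_mulVec, Matrix.nonsing_inv_mul X hdet, one_mulVec]
    rw [hy, hcol, Matrix.mul_inv_rev, ← mulVec_mulVec, h1]
  have hXTy : Xᵀ *ᵥ y = e := by
    rw [hy', mulVec_mulVec, Matrix.mul_nonsing_inv Xᵀ hdetT, one_mulVec]
  set D : Matrix (Fin nf ⊕ Fin k) (Fin nf ⊕ Fin k) ℝ :=
    fromBlocks (diagonal σs) 0 0 (1 : Matrix (Fin k) (Fin k) ℝ) with hD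
  set F : Matrix (Fin nf ⊕ Fin k) (Fin nf) ℝ :=
    fromRows (diagonal σf) (0 : Matrix (Fin k) (Fin nf) ℝ) with hF
  have hDe : Dᵀ *ᵥ e = Pi.single (Sum.inl i) (σs i) := by
    rw [he, mulVec_single]
    funext j
    rcases j with j | j <;>
      simp [hD, fromBlocks, diagonal, Pi.single_apply, eq_comm]
  have hDe' : D *ᵥ Pi.single (Sum.inl i) (σs i) = Pi.single (Sum.inl i) (σs i * σs i) := by
    rw [mulVec_single]
    funext j
    rcases j with j | j
    · rcases eq_or_ne j i with h | h
      · subst h; simp [hD, fromBlocks, diagonal, Pi.single_apply]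
      · simp [hD, fromBlocks, diagonal, Pi.single_apply, h, Ne.symm h]
    · simp [hD, fromBlocks, Pi.single_apply]
  have hFe : Fᵀ *ᵥ e = Pi.single i (σf i) := by
    rw [he, mulVec_single]
    funext j
    simp [hF, fromRows_apply_inl, fromRows_apply_inr, diagonal, Pi.single_apply, eq_comm]
  have hFe' : F *ᵥ Pi.single i (σf i) = Pi.single (Sum.inl i) (σf i * σf i) := by
    rw [mulVec_single]
    funext j
    rcases j with j | j
    · rcases eq_or_ne j i with h | h
      · subst h; simp [hF, fromRows_apply_inl, diagonal, Pi.single_apply]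
      · simp [hF, fromRows_apply_inl, diagonal, Pi.single_apply, h, Ne.symm h]
    · simp [hF, fromRows_apply_inr, Pi.single_apply]
  -- Rsᵀ *ᵥ y
  have hRsy : Rsᵀ *ᵥ y = Us *ᵥ Pi.single (Sum.inl i) (σs i) := by
    rw [hRsX, transpose_mul, transpose_mul, transpose_transpose,
      ← mulVec_mulVec, ← mulVec_mulVec, hXTy, hDe]
  have hRfy : Rfᵀ *ᵥ y = Uf *ᵥ Pi.single i (σf i) := by
    rw [hRfX, transpose_mul, transpose_mul, transpose_transpose,
      ← mulVec_mulVec, ← mulVec_mulVec, hXTy, hFe]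
  -- sums of squares
  have hUsii : ∑ j, Us j (Sum.inl i) ^ 2 = 1 := by
    have := congrFun (congrFun hUs (Sum.inl i)) (Sum.inl i)
    simpa [Matrix.mul_apply, sq, Matrix.one_apply] using this
  have hUfii : ∑ j, Uf j i ^ 2 = 1 := by
    have := congrFun (congrFun hUf i) i
    simpa [Matrix.mul_apply, sq, Matrix.one_apply] using this
  have hSs : (∑ j, Rsᵀ.mulVec y j ^ 2) = σs i ^ 2 := by
    rw [hRsy]
    have : ∀ j, (Us *ᵥ Pi.single (Sum.inl i) (σs i)) j = Us j (Sum.inl i) * σs i := by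
      intro j; rw [mulVec_single]; simp [Matrix.col]
    calc ∑ j, (Us *ᵥ Pi.single (Sum.inl i) (σs i)) j ^ 2
        = ∑ j, (Us j (Sum.inl i)) ^ 2 * σs i ^ 2 := by
          refine Finset.sum_congr rfl fun j _ => ?_
          rw [this j, mul_pow]
      _ = σs i ^ 2 := by rw [← Finset.sum_mul, hUsii, one_mul]
  have hSf : (∑ j, Rfᵀ.mulVec y j ^ 2) = σf i ^ 2 := by
    rw [hRfy]
    have : ∀ j, (Uf *ᵥ Pi.single i (σf i)) j = Uf j i * σf i := by
      intro j; rw [mulVec_single]; simp [Matrix.col]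
    calc ∑ j, (Uf *ᵥ Pi.single i (σf i)) j ^ 2
        = ∑ j, (Uf j i) ^ 2 * σf i ^ 2 := by
          refine Finset.sum_congr rfl fun j _ => ?_
          rw [this j, mul_pow]
      _ = σf i ^ 2 := by rw [← Finset.sum_mul, hUfii, one_mul]
  have has : σs i ^ 2 ≠ 0 := pow_ne_zero 2 (hσs i).ne'
  have haf : σf i ^ 2 ≠ 0 := pow_ne_zero 2 (hσf i).ne'
  refine ⟨by rw [hSs]; exact has, by rw [hSf]; exact haf, ?_⟩
  -- (Rs * Rsᵀ) *ᵥ y and (Rf * Rfᵀ) *ᵥ y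
  set x : (Fin nf ⊕ Fin k) → ℝ := fun j => X j (Sum.inl i) with hx
  have hRsRs : (Rs * Rsᵀ) *ᵥ y = (σs i * σs i) • x := by
    rw [← mulVec_mulVec, hRsy, mulVec_mulVec, hRsX, Matrix.mul_assoc X D,
      Matrix.mul_assoc X (D * Usᵀ), Matrix.mul_assoc D, hUs, Matrix.mul_one,
      ← mulVec_mulVec, hDe', mulVec_single]
    funext j
    rcases eq_or_ne j (Sum.inl i) with h | h <;>
      simp [hx, Pi.single_apply, h, mul_comm]
  have hRfRf : (Rf * Rfᵀ) *ᵥ y = (σf i * σf i) • x := by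
    rw [← mulVec_mulVec, hRfy, mulVec_mulVec, hRfX, Matrix.mul_assoc X F,
      Matrix.mul_assoc X (F * Ufᵀ), Matrix.mul_assoc F, hUf, Matrix.mul_one,
      ← mulVec_mulVec, hFe', mulVec_single]
    funext j
    rcases eq_or_ne j (Sum.inl i) with h | h <;>
      simp [hx, Pi.single_apply, h, mul_comm]
  rw [hSs, hSf, hRsRs, hRfRf]
  funext j
  simp only [Pi.add_apply, Pi.smul_apply, Pi.sub_apply, Pi.zero_apply, smul_eq_mul]
  field_simp [(hσs i).ne', (hσf i).ne']
  ring
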